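/- arXiv:2004.03658 — 2 statements merged into one kernel-verified Lean document; each statement's English description precedes it below -/
import Mathlib

section
/- (Recovery theorem.) Let v : Fin N → ℝ≥0 be a weighted set, let C ⊆ Fin N be a finite candidate set with supp(v) ⊆ C, suppose N_W > 2 · |supp(v)|, and let 0 < δ ≤ 1 satisfy δ · 2^{N_D} > |C| (equivalently, N_D > log₂(|C|/δ)). If the family H = (h_1,…,h_{N_D}) is drawn uniformly at random in the random-hash model, then with probability at least 1 − δ, v is recovered from S_H(v) using C, i.e. CM_H(i, S_H(v)) = v i for every i ∈ C. -/
open Finset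

/-- The primitive sketch of a weighted set `v` under hash function `h`. -/
def sketch {N NW : ℕ} (h : Fin N → Fin NW) (v : Fin N → NNReal) : Fin NW → NNReal :=
  fun k => ∑ i ∈ Finset.univ.filter (fun i => h i = k), v i

/-- The support of a weighted set, as a finset. -/
noncomputable def supp {N : ℕ} (v : Fin N → NNReal) : Finset (Fin N) :=
  Finset.univ.filter (fun i => v i ≠ 0)

/-- The count-min sketch of `v` under the family `H`: the `j`-th row is the
primitive sketch of `v` under `H j`. -/
def cmSketch {N NW ND : ℕ} (H : Fin ND → Fin N → Fin NW) (v : Fin N → NNReal) :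
    Fin ND → Fin NW → NNReal :=
  fun j => sketch (H j) v

/-- The count-min lookup of `i` in an `ND × NW` matrix `M`, relative to the
family `H`: the minimum over `j` of `M[j, h_j(i)]`. -/
noncomputable def cmLookup {N NW ND : ℕ} (H : Fin ND → Fin N → Fin NW)
    (M : Fin ND → Fin NW → NNReal) (i : Fin N) : NNReal :=
  ⨅ j, M j (H j i)

lemma le_sketch {N NW : ℕ} (h : Fin N → Fin NW) (v : Fin N → NNReal) (i : Fin N) :
    v i ≤ sketch h v (h i) :=
  Finset.single_le_sum (fun j _ => zero_le) (by simp)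

lemma sketch_eq {N NW : ℕ} (h : Fin N → Fin NW) (v : Fin N → NNReal) (i : Fin N)
    (hc : ∀ i', v i' ≠ 0 → i' ≠ i → h i' ≠ h i) :
    sketch h v (h i) = v i := by
  unfold sketch
  rw [Finset.sum_eq_single i]
  · intro b hb hbi
    by_contra hvb
    exact hc b hvb hbi (by simpa using hb)
  · simp

lemma lookup_eq {N NW ND : ℕ} (hND : 0 < ND) (H : Fin ND → Fin N → Fin NW)
    (v : Fin N → NNReal) (i : Fin N)
    (j : Fin ND) (hj : ∀ i', v i' ≠ 0 → i' ≠ i → H j i' ≠ H j i) :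
    cmLookup H (cmSketch H v) i = v i := by
  unfold cmLookup cmSketch
  apply le_antisymm
  · exact le_trans (ciInf_le' _ j) (le_of_eq (sketch_eq _ _ _ hj))
  · haveI : Nonempty (Fin ND) := ⟨⟨0, hND⟩⟩
    exact le_ciInf fun j' => le_sketch (H j') v i

lemma coll_card {N NW : ℕ} (i i' : Fin N) (hne : i' ≠ i) :
    (univ.filter (fun h : Fin N → Fin NW => h i' = h i)).card * NW ≤ NW ^ N := by
  classical
  have hcard : ((univ.filter (fun h : Fin N → Fin NW => h i' = h i)) ×ˢ
      (univ : Finset (Fin NW))).card ≤ (univ : Finset (Fin N → Fin NW)).card := by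
    apply Finset.card_le_card_of_injOn (fun p => Function.update p.1 i' p.2)
    · intro p _; exact mem_univ _
    · rintro ⟨h₁, k₁⟩ hp₁ ⟨h₂, k₂⟩ hp₂ heq
      simp only [Finset.coe_product, Set.mem_prod, Finset.mem_coe, Finset.mem_filter] at hp₁ hp₂
      have hk : k₁ = k₂ := by
        have hK : Function.update h₁ i' k₁ i' = Function.update h₂ i' k₂ i' := congrFun heq i'
        simpa using hK
      have hh : h₁ = h₂ := by
        funext x
        by_cases hx : x = i'
        · subst hx
          have hi : Function.update h₁ x k₁ i = Function.update h₂ x k₂ i := congrFun heq i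
          rw [Function.update_of_ne (Ne.symm hne), Function.update_of_ne (Ne.symm hne)] at hi
          rw [hp₁.1.2, hp₂.1.2, hi]
        · have hX : Function.update h₁ i' k₁ x = Function.update h₂ i' k₂ x := congrFun heq x
          simpa [Function.update_of_ne hx] using hX
      rw [Prod.mk.injEq]; exact ⟨hh, hk⟩
  simpa [Finset.card_product, Fintype.card_fun] using hcard

lemma pi_filter_card {ND : ℕ} {α : Type*} [Fintype α] [DecidableEq α]
    (p : α → Prop) [DecidablePred p] :
    (univ.filter (fun H : Fin ND → α => ∀ j, p (H j))).card
      = (univ.filter p).card ^ ND := by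
  classical
  rw [← Fintype.card_subtype, ← Fintype.card_subtype]
  rw [Fintype.card_congr (Equiv.subtypePiEquivPi (p := fun _ : Fin ND => p))]
  simp [Fintype.card_fun]

lemma badRow_card {N NW : ℕ} (hN : 0 < N) (hNW : 0 < NW) (v : Fin N → NNReal)
    (hW : 2 * (supp v).card < NW) (i : Fin N) :
    2 * (univ.filter (fun h : Fin N → Fin NW =>
        ∃ i' ∈ supp v, i' ≠ i ∧ h i' = h i)).card ≤ NW ^ N := by
  classical
  set bad := univ.filter (fun h : Fin N → Fin NW => ∃ i' ∈ supp v, i' ≠ i ∧ h i' = h i)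
    with hbad
  have hsub : bad ⊆ ((supp v).erase i).biUnion
      (fun i' => univ.filter (fun h : Fin N → Fin NW => h i' = h i)) := by
    intro h hh
    simp only [hbad, mem_filter, mem_univ, true_and] at hh
    obtain ⟨i', hi'S, hi'ne, hcol⟩ := hh
    exact mem_biUnion.2 ⟨i', mem_erase.2 ⟨hi'ne, hi'S⟩, by simp [hcol]⟩
  have hb : bad.card * NW ≤ (supp v).card * NW ^ N := by
    calc bad.card * NW
        ≤ (∑ i' ∈ (supp v).erase i,
            (univ.filter (fun h : Fin N → Fin NW => h i' = h i)).card) * NW :=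
          Nat.mul_le_mul_right _ (le_trans (card_le_card hsub) card_biUnion_le)
      _ = ∑ i' ∈ (supp v).erase i,
            (univ.filter (fun h : Fin N → Fin NW => h i' = h i)).card * NW := by
          rw [Finset.sum_mul]
      _ ≤ ∑ i' ∈ (supp v).erase i, NW ^ N := by
          apply Finset.sum_le_sum
          intro i' hi'
          exact coll_card i i' (Finset.ne_of_mem_erase hi')
      _ = ((supp v).erase i).card * NW ^ N := by rw [Finset.sum_const, smul_eq_mul]
      _ ≤ (supp v).card * NW ^ N :=
          Nat.mul_le_mul_right _ (card_le_card (Finset.erase_subset _ _))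
  apply Nat.le_of_mul_le_mul_right _ hNW
  calc 2 * bad.card * NW = 2 * (bad.card * NW) := by ring
    _ ≤ 2 * ((supp v).card * NW ^ N) := Nat.mul_le_mul_left _ hb
    _ = (2 * (supp v).card) * NW ^ N := by ring
    _ ≤ NW * NW ^ N := Nat.mul_le_mul_right _ (le_of_lt hW)
    _ = NW ^ N * NW := by ring


/-- Recovery theorem: if `supp v ⊆ C`, `NW > 2 * |supp v|`, `0 < δ ≤ 1` and
`δ * 2 ^ ND > |C|`, then for `H` drawn uniformly at random, with probability
at least `1 - δ` we have `CM_H(i, S_H(v)) = v i` for every `i ∈ C`. -/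
theorem prob_recovery_ge
    {N NW ND : ℕ} (hN : 0 < N) (hNW : 0 < NW) (hND : 0 < ND)
    (v : Fin N → NNReal) (C : Finset (Fin N))
    (hsub : supp v ⊆ C)
    (hW : 2 * (supp v).card < NW)
    (δ : ℝ) (hδ0 : 0 < δ) (hδ1 : δ ≤ 1)
    (hD : (C.card : ℝ) < δ * 2 ^ ND) :
    (1 : ℝ) - δ ≤
      ((Finset.univ.filter (fun H : Fin ND → Fin N → Fin NW =>
          ∀ i ∈ C, cmLookup H (cmSketch H v) i = v i)).card : ℝ)
        / (Fintype.card (Fin ND → Fin N → Fin NW) : ℝ) := by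
    classical
  haveI : Nonempty (Fin NW) := ⟨⟨0, hNW⟩⟩
  set T := Fintype.card (Fin ND → Fin N → Fin NW) with hT
  have hTval : T = (NW ^ N) ^ ND := by
    simp [hT, Fintype.card_fun]
  have hTpos : 0 < T := Fintype.card_pos
  set good := Finset.univ.filter (fun H : Fin ND → Fin N → Fin NW =>
      ∀ i ∈ C, cmLookup H (cmSketch H v) i = v i) with hgood
  set fail := Finset.univ.filter (fun H : Fin ND → Fin N → Fin NW =>
      ¬ ∀ i ∈ C, cmLookup H (cmSketch H v) i = v i) with hfail
  have hsplit : good.card + fail.card = T := by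
    rw [hgood, hfail]
    rw [Finset.card_filter_add_card_filter_not]
    simp [hT]
  -- the bad events
  set Bad : Fin N → Finset (Fin ND → Fin N → Fin NW) := fun i =>
    univ.filter (fun H => ∀ j, ∃ i' ∈ supp v, i' ≠ i ∧ H j i' = H j i) with hBad
  have hfail_sub : fail ⊆ C.biUnion Bad := by
    intro H hH
    rw [hfail, mem_filter] at hH
    obtain ⟨-, hH⟩ := hH
    push_neg at hH
    obtain ⟨i, hiC, hne⟩ := hH
    refine mem_biUnion.2 ⟨i, hiC, ?_⟩
    rw [hBad, mem_filter]
    refine ⟨mem_univ _, fun j => ?_⟩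
    by_contra hcon
    push_neg at hcon
    apply hne
    apply lookup_eq hND H v i j
    intro i' hvi' hi'ne
    exact hcon i' (by simp [supp, hvi']) hi'ne
  have hBadcard : ∀ i, (Bad i).card
      = (univ.filter (fun h : Fin N → Fin NW => ∃ i' ∈ supp v, i' ≠ i ∧ h i' = h i)).card ^ ND :=
    by
    intro i
    rw [hBad]
    exact pi_filter_card (fun h : Fin N → Fin NW => ∃ i' ∈ supp v, i' ≠ i ∧ h i' = h i)
  have hkey : fail.card * 2 ^ ND ≤ C.card * T := by
    calc fail.card * 2 ^ ND
        ≤ (∑ i ∈ C, (Bad i).card) * 2 ^ ND :=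
          Nat.mul_le_mul_right _ (le_trans (card_le_card hfail_sub) card_biUnion_le)
      _ = ∑ i ∈ C, (Bad i).card * 2 ^ ND := by rw [Finset.sum_mul]
      _ ≤ ∑ i ∈ C, (NW ^ N) ^ ND := by
          apply Finset.sum_le_sum
          intro i _
          rw [hBadcard i, ← mul_pow]
          apply Nat.pow_le_pow_left
          rw [mul_comm]
          exact badRow_card hN hNW v hW i
      _ = C.card * (NW ^ N) ^ ND := by rw [Finset.sum_const, smul_eq_mul]
      _ = C.card * T := by rw [hTval]
  -- pass to the reals
  have hTposR : (0 : ℝ) < (T : ℝ) := by exact_mod_cast hTpos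
  have h2pos : (0 : ℝ) < (2 : ℝ) ^ ND := by positivity
  have hkeyR : (fail.card : ℝ) * 2 ^ ND ≤ (C.card : ℝ) * T := by exact_mod_cast hkey
  have hgoodR : (good.card : ℝ) = (T : ℝ) - fail.card := by
    have : (good.card : ℝ) + fail.card = T := by exact_mod_cast hsplit
    linarith
  rw [le_div_iff₀ hTposR]
  rw [hgoodR]
  nlinarith [mul_pos hδ0 hTposR, hTposR, h2pos, hD, hkeyR,
    mul_lt_mul_of_pos_right hD hTposR]
end

section
/- (Relative-error count-min bound.) Let v : Fin N → ℝ≥0 be a weighted set, let i ∈ Fin N, and let ε > 0 satisfy N_W ≥ 2/ε. If the family H = (h_1,…,h_{N_D}) is drawn uniformly at random in the random-hash model, then the probability that CM_H(i, S_H(v)) > v i + ε · ‖v‖₁ is at most 1 / 2^{N_D}. In particular, if additionally N_D ≥ log₂(1/δ) for some 0 < δ ≤ 1, this probability is at most δ. -/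
open Finset

/-- Counting lemma: the number of hash functions with a collision at two
fixed distinct points is `NW ^ (N - 1)`. -/
lemma card_hash_collision {N NW : ℕ} (hN : 0 < N) (i i' : Fin N) (hne : i' ≠ i) :
    (Finset.univ.filter (fun h : Fin N → Fin NW => h i' = h i)).card = NW ^ (N - 1) := by
  have hin : i ≠ i' := hne.symm
  have e : {h : Fin N → Fin NW // h i' = h i} ≃ ({x : Fin N // x ≠ i'} → Fin NW) :=
    { toFun := fun h x => h.1 x.1
      invFun := fun g =>
        ⟨fun x => if hx : x = i' then g ⟨i, hin⟩ else g ⟨x, hx⟩, by simp [hin]⟩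
      left_inv := by
        rintro ⟨h, hh⟩
        apply Subtype.ext
        funext x
        show (if hx : x = i' then h i else h x) = h x
        split_ifs with hx
        · subst hx; exact hh.symm
        · rfl
      right_inv := by
        intro g
        funext x
        simp [x.2] }
  have h1 : (Finset.univ.filter (fun h : Fin N → Fin NW => h i' = h i)).card
      = Fintype.card {h : Fin N → Fin NW // h i' = h i} :=
    (Fintype.card_subtype _).symm
  have hc : Fintype.card {x : Fin N // x ≠ i'} = N - 1 := by
    simp [Fintype.card_subtype_compl, Fintype.card_subtype_eq]
  rw [h1, Fintype.card_congr e, Fintype.card_fun, Fintype.card_fin, hc]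

/-- Single-hash Markov bound: at most half of all hash functions overestimate
`v i` by more than `ε * ‖v‖₁`. -/
lemma card_bad_single {N NW : ℕ} (hN : 0 < N) (hNW : 0 < NW)
    (v : Fin N → NNReal) (i : Fin N) (ε : ℝ) (hε : 0 < ε) (hW : 2 / ε ≤ (NW : ℝ)) :
    2 * ((Finset.univ.filter (fun h : Fin N → Fin NW =>
      (v i : ℝ) + ε * ∑ i' : Fin N, (v i' : ℝ) < (sketch h v (h i) : ℝ))).card) ≤ NW ^ N := by
  classical
  set S : ℝ := ∑ i' : Fin N, (v i' : ℝ) with hS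
  set exc : (Fin N → Fin NW) → ℝ :=
    fun h => ∑ i' ∈ (Finset.univ.filter (fun i' => h i' = h i)).erase i, (v i' : ℝ) with hexc
  have hsk : ∀ h : Fin N → Fin NW, (sketch h v (h i) : ℝ) = (v i : ℝ) + exc h := by
    intro h
    rw [sketch, NNReal.coe_sum]
    exact (Finset.add_sum_erase _ _ (by simp)).symm
  set B := Finset.univ.filter (fun h : Fin N → Fin NW =>
      (v i : ℝ) + ε * S < (sketch h v (h i) : ℝ)) with hB
  have hmemB : ∀ h, h ∈ B ↔ ε * S < exc h := by
    intro h
    simp [hB, hsk h]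
  have hexc_nonneg : ∀ h, 0 ≤ exc h := fun h =>
    Finset.sum_nonneg fun _ _ => (v _).coe_nonneg
  have hexc_eq : ∀ h : Fin N → Fin NW,
      exc h = ∑ i' ∈ Finset.univ.erase i, (if h i' = h i then (v i' : ℝ) else 0) := by
    intro h
    have hset : (Finset.univ.filter (fun i' => h i' = h i)).erase i
        = (Finset.univ.erase i).filter (fun i' => h i' = h i) := by
      ext x
      simp only [Finset.mem_erase, Finset.mem_filter, Finset.mem_univ, true_and]
      tauto
    simp only [hexc, hset, Finset.sum_filter]
  have hsum : ∑ h : Fin N → Fin NW, exc h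
      = ∑ i' ∈ Finset.univ.erase i, (v i' : ℝ) * (NW : ℝ) ^ (N - 1) := by
    simp only [hexc_eq]
    rw [Finset.sum_comm]
    refine Finset.sum_congr rfl fun i' hi' => ?_
    have hne : i' ≠ i := (Finset.mem_erase.1 hi').1
    rw [← Finset.sum_filter, Finset.sum_const,
      card_hash_collision (NW := NW) hN i i' hne, nsmul_eq_mul]
    push_cast
    ring
  have hsum_le : ∑ h : Fin N → Fin NW, exc h ≤ S * (NW : ℝ) ^ (N - 1) := by
    rw [hsum]
    rw [← Finset.sum_mul]
    apply mul_le_mul_of_nonneg_right _ (by positivity)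
    exact Finset.sum_le_sum_of_subset_of_nonneg (Finset.erase_subset _ _)
      (fun _ _ _ => (v _).coe_nonneg)
  rcases eq_or_lt_of_le (show (0:ℝ) ≤ S from Finset.sum_nonneg fun _ _ => (v _).coe_nonneg)
    with h0 | hSpos
  · -- S = 0 : bad set is empty
    have : B = ∅ := by
      rw [Finset.eq_empty_iff_forall_notMem]
      intro h hh
      have := (hmemB h).1 hh
      have h1 : exc h ≤ S := by
        rw [hS]
        exact Finset.sum_le_sum_of_subset_of_nonneg
          (by intro x _; exact Finset.mem_univ x) (fun _ _ _ => (v _).coe_nonneg)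
      nlinarith [hexc_nonneg h]
    simp [this]
  · -- S > 0 : Markov
    have hmark : (B.card : ℝ) * (ε * S) ≤ S * (NW : ℝ) ^ (N - 1) := by
      calc (B.card : ℝ) * (ε * S) = ∑ _h ∈ B, ε * S := by rw [Finset.sum_const, nsmul_eq_mul]
        _ ≤ ∑ h ∈ B, exc h := Finset.sum_le_sum fun h hh => ((hmemB h).1 hh).le
        _ ≤ ∑ h : Fin N → Fin NW, exc h :=
            Finset.sum_le_sum_of_subset_of_nonneg (Finset.subset_univ _)
              (fun h _ _ => hexc_nonneg h)
        _ ≤ S * (NW : ℝ) ^ (N - 1) := hsum_le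
    have hεS : 0 < ε * S := mul_pos hε hSpos
    have hcard : (B.card : ℝ) ≤ (NW : ℝ) ^ (N - 1) / ε := by
      rw [div_eq_mul_inv, ← mul_le_mul_iff_of_pos_right hεS]
      calc (B.card : ℝ) * (ε * S) ≤ S * (NW : ℝ) ^ (N - 1) := hmark
        _ = (NW : ℝ) ^ (N - 1) * ε⁻¹ * (ε * S) := by
            field_simp
    have h2 : (2 : ℝ) * B.card ≤ (NW : ℝ) ^ N := by
      have hNW' : 2 / ε * (NW : ℝ) ^ (N - 1) ≤ (NW : ℝ) * (NW : ℝ) ^ (N - 1) :=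
        mul_le_mul_of_nonneg_right hW (by positivity)
      have hpow : (NW : ℝ) * (NW : ℝ) ^ (N - 1) = (NW : ℝ) ^ N := by
        rw [← pow_succ']
        congr 1
        omega
      calc (2 : ℝ) * B.card ≤ 2 * ((NW : ℝ) ^ (N - 1) / ε) := by linarith
        _ = 2 / ε * (NW : ℝ) ^ (N - 1) := by ring
        _ ≤ (NW : ℝ) ^ N := by rw [← hpow]; exact hNW'
    exact_mod_cast h2

/-- Relative-error count-min bound: if `ε > 0` with `NW ≥ 2/ε`, then for `H`
drawn uniformly at random, the probability that
`CM_H(i, S_H(v)) > v i + ε * ‖v‖₁` is at most `1 / 2 ^ ND`; in particular,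
if moreover `ND ≥ log₂(1/δ)` with `0 < δ ≤ 1`, it is at most `δ`. -/
theorem prob_cmLookup_relative_err
    {N NW ND : ℕ} (hN : 0 < N) (hNW : 0 < NW) (hND : 0 < ND)
    (v : Fin N → NNReal) (i : Fin N)
    (ε : ℝ) (hε : 0 < ε) (hW : 2 / ε ≤ (NW : ℝ)) :
    ((Finset.univ.filter (fun H : Fin ND → Fin N → Fin NW =>
        (v i : ℝ) + ε * ∑ i' : Fin N, (v i' : ℝ)
          < (cmLookup H (cmSketch H v) i : ℝ))).card : ℝ)
      / (Fintype.card (Fin ND → Fin N → Fin NW) : ℝ)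
      ≤ 1 / 2 ^ ND ∧
    ∀ δ : ℝ, 0 < δ → δ ≤ 1 → Real.logb 2 (1 / δ) ≤ (ND : ℝ) →
      ((Finset.univ.filter (fun H : Fin ND → Fin N → Fin NW =>
          (v i : ℝ) + ε * ∑ i' : Fin N, (v i' : ℝ)
            < (cmLookup H (cmSketch H v) i : ℝ))).card : ℝ)
        / (Fintype.card (Fin ND → Fin N → Fin NW) : ℝ)
        ≤ δ := by
  classical
  have : NeZero ND := ⟨hND.ne'⟩
  set t : ℝ := (v i : ℝ) + ε * ∑ i' : Fin N, (v i' : ℝ) with ht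
  set B := Finset.univ.filter (fun h : Fin N → Fin NW =>
    t < ((sketch h v (h i) : NNReal) : ℝ)) with hBdef
  have hlook : ∀ H : Fin ND → Fin N → Fin NW,
      (t < (cmLookup H (cmSketch H v) i : ℝ)) ↔
        ∀ j, t < ((sketch (H j) v (H j i) : NNReal) : ℝ) := by
    intro H
    constructor
    · intro h j
      exact lt_of_lt_of_le h (NNReal.coe_le_coe.2 (ciInf_le (OrderBot.bddBelow _) j))
    · intro h
      obtain ⟨j0, -, hj0⟩ := Finset.exists_mem_eq_inf' Finset.univ_nonempty
        (fun j : Fin ND => cmSketch H v j (H j i))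
      rw [cmLookup, ← Finset.inf'_univ_eq_ciInf, hj0]
      exact h j0
  have hfilter : Finset.univ.filter (fun H : Fin ND → Fin N → Fin NW =>
      t < (cmLookup H (cmSketch H v) i : ℝ)) = Fintype.piFinset (fun _ : Fin ND => B) := by
    ext H
    simp only [Finset.mem_filter, Finset.mem_univ, true_and, Fintype.mem_piFinset, hlook H,
      hBdef]
  have hcard1 : (Finset.univ.filter (fun H : Fin ND → Fin N → Fin NW =>
      t < (cmLookup H (cmSketch H v) i : ℝ))).card = B.card ^ ND := by
    rw [hfilter, Fintype.card_piFinset]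
    simp
  have htot : Fintype.card (Fin ND → Fin N → Fin NW) = (NW ^ N) ^ ND := by
    simp [Fintype.card_fun]
  have hhalfN : 2 * B.card ≤ NW ^ N := card_bad_single hN hNW v i ε hε hW
  have hpowpos : (0:ℝ) < (NW:ℝ) ^ N := by positivity
  have hhalf : (B.card : ℝ) / (NW : ℝ) ^ N ≤ 1 / 2 := by
    rw [div_le_div_iff₀ hpowpos two_pos]
    have : (2 : ℝ) * B.card ≤ (NW : ℝ) ^ N := by exact_mod_cast hhalfN
    linarith
  have hmain : ((Finset.univ.filter (fun H : Fin ND → Fin N → Fin NW =>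
      t < (cmLookup H (cmSketch H v) i : ℝ))).card : ℝ)
      / (Fintype.card (Fin ND → Fin N → Fin NW) : ℝ) ≤ 1 / 2 ^ ND := by
    rw [hcard1, htot]
    push_cast
    rw [← div_pow]
    calc ((B.card : ℝ) / (NW : ℝ) ^ N) ^ ND ≤ (1/2 : ℝ) ^ ND :=
        pow_le_pow_left₀ (by positivity) hhalf ND
      _ = 1 / 2 ^ ND := by rw [div_pow, one_pow]
  refine ⟨hmain, fun δ hδ0 _hδ1 hlogb => ?_⟩
  have h1 : (1:ℝ)/δ ≤ (2:ℝ) ^ (ND : ℝ) :=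
    (Real.logb_le_iff_le_rpow (by norm_num) (by positivity)).1 hlogb
  rw [Real.rpow_natCast] at h1
  have h2 : (1:ℝ) / 2 ^ ND ≤ δ := (one_div_le hδ0 (by positivity)).1 h1
  exact hmain.trans h2
end
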